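/- For every m ∈ 𝓜(W), the quasi-covariant ring 𝐐_m(W) is a finitely generated commutative 𝕜-algebra; in particular, it is Noetherian. -/

import Mathlib

/-!
STATEMENT 19.  For every m ∈ 𝓜(W), the quasi-covariant ring 𝐐_m(W) is a finitely
generated commutative 𝕜-algebra; in particular, it is Noetherian.
(The hypothesis `hfg` records that 𝕜[V] itself is a finitely generated 𝕜-algebra,
which is part of the context "𝕜[V] = Sym(V*) with V finite-dimensional".)
-/

namespace Statement19

variable {K R W A : Type*}

/-- the quasi-covariant ring `𝐐_m(W)` as a 𝕜-subalgebra of `∏_{w∈W} 𝕜[V]`. -/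
def QcovSubalgebra (K : Type*) [CommSemiring K] [CommRing R] [Algebra K R]
    [Group W] [MulSemiringAction W R]
    (a : A → R) (s : A → W) (m : A → ℕ) : Subalgebra K (W → R) where
  carrier := {p | ∀ (α : A) (w : W), a α ^ m α ∣ p (s α * w) - p w}
  one_mem' := by intro α w; simp
  add_mem' := by
    intro p q hp hq α w
    have h : (p + q) (s α * w) - (p + q) w
        = (p (s α * w) - p w) + (q (s α * w) - q w) := by
      simp only [Pi.add_apply]; ring
    rw [h]; exact dvd_add (hp α w) (hq α w)
  mul_mem' := by
    intro p q hp hq α w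
    have h : (p * q) (s α * w) - (p * q) w
        = p (s α * w) * (q (s α * w) - q w) + (p (s α * w) - p w) * q w := by
      simp only [Pi.mul_apply]; ring
    rw [h]
    exact dvd_add (Dvd.dvd.mul_left (hq α w) _) (Dvd.dvd.mul_right (hp α w) _)
  algebraMap_mem' := by
    intro c α w
    have h : (algebraMap K (W → R) c) (s α * w) - (algebraMap K (W → R) c) w = 0 := by
      simp
    rw [h]
    exact dvd_zero _

/-- The quasi-covariant ring viewed as an `R`-submodule of `W → R`
(via the diagonal action of `R` on `W → R`). -/
def QcovSubmodule [CommRing R] [Group W] [MulSemiringAction W R]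
    (a : A → R) (s : A → W) (m : A → ℕ) : Submodule R (W → R) where
  carrier := {p | ∀ (α : A) (w : W), a α ^ m α ∣ p (s α * w) - p w}
  add_mem' := by
    intro p q hp hq α w
    have h : (p + q) (s α * w) - (p + q) w
        = (p (s α * w) - p w) + (q (s α * w) - q w) := by
      simp only [Pi.add_apply]; ring
    rw [h]; exact dvd_add (hp α w) (hq α w)
  zero_mem' := by intro α w; simp
  smul_mem' := by
    intro r p hp α w
    have h : (r • p) (s α * w) - (r • p) w = r * (p (s α * w) - p w) := by
      simp only [Pi.smul_apply, smul_eq_mul]; ring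
    rw [h]
    exact Dvd.dvd.mul_left (hp α w) r

set_option maxHeartbeats 1000000 in
set_option synthInstance.maxHeartbeats 1000000 in
theorem statement_19
    [Field K] [CharZero K] [CommRing R] [IsDomain R] [Algebra K R]
    [Group W] [Fintype W] [MulSemiringAction W R] [SMulCommClass W K R]
    [Fintype A]
    (hfg : (⊤ : Subalgebra K R).FG)
    (a : A → R) (s : A → W)
    (haP : ∀ α, Prime (a α))
    (hne : ∀ α β, α ≠ β → ¬ a α ∣ a β)
    (hs2 : ∀ α, s α * s α = 1)
    (hsa : ∀ α, s α • a α = - a α)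
    (hdvd : ∀ (α : A) (p : R), a α ∣ s α • p - p)
    (wA : W → A → A)
    (hwA_one : ∀ α, wA 1 α = α)
    (hwA_mul : ∀ g h α, wA (g * h) α = wA g (wA h α))
    (hws : ∀ w α, s (wA w α) = w * s α * w⁻¹)
    (hwa : ∀ w α, ∃ c : K, c ≠ 0 ∧ w • a α = c • a (wA w α))
    (m : A → ℕ) (hm : ∀ w α, m (wA w α) = m α) :
    (QcovSubalgebra K a s m).FG ∧ IsNoetherianRing ↥(QcovSubalgebra K a s m) := by
  classical
  -- `R` is a finitely generated `K`-algebra, hence Noetherian.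
  haveI hRft : Algebra.FiniteType K R := ⟨hfg⟩
  haveI hRnoeth : IsNoetherianRing R := Algebra.FiniteType.isNoetherianRing K R
  -- The quasi-covariant ring as an `R`-submodule of the Noetherian `R`-module `W → R`.
  set S : Submodule R (W → R) := QcovSubmodule a s m with hS
  haveI : Module.Finite R (W → R) := Module.Finite.pi
  have hSfg : S.FG := IsNoetherian.noetherian S
  haveI hSfin : Module.Finite R ↥S := Module.Finite.iff_fg.mpr hSfg
  -- The diagonal embedding `R → 𝐐`, giving `𝐐` the structure of an `R`-algebra.
  have hdiag : ∀ r : R, Pi.constRingHom W R r ∈ QcovSubalgebra K a s m := by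
    intro r α w
    have : (Pi.constRingHom W R r) (s α * w) - (Pi.constRingHom W R r) w = 0 := by
      exact sub_self r
    rw [this]; exact dvd_zero _
  letI : Algebra R ↥(QcovSubalgebra K a s m) :=
    ((Pi.constRingHom W R).codRestrict (QcovSubalgebra K a s m) hdiag).toAlgebra
  -- `𝐐 ≃ₗ[R] S`, so `𝐐` is a finite `R`-module.
  have hmem : ∀ p : W → R, p ∈ QcovSubalgebra K a s m ↔ p ∈ S := fun p => Iff.rfl
  let e : (↥S) ≃ₗ[R] ↥(QcovSubalgebra K a s m) :=
    { toFun := fun x => ⟨x.1, (hmem x.1).mpr x.2⟩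
      invFun := fun x => ⟨x.1, (hmem x.1).mp x.2⟩
      map_add' := fun x y => rfl
      map_smul' := by
        intro r x
        apply Subtype.ext
        funext w
        show r * x.1 w = (Pi.constRingHom W R r * x.1) w
        rfl
      left_inv := fun x => rfl
      right_inv := fun x => rfl }
  haveI : Module.Finite R ↥(QcovSubalgebra K a s m) := Module.Finite.equiv e
  haveI : Algebra.FiniteType R ↥(QcovSubalgebra K a s m) := Module.Finite.finiteType _
  -- The scalar tower `K → R → 𝐐`.
  haveI : IsScalarTower K R ↥(QcovSubalgebra K a s m) := by
    apply IsScalarTower.of_algebraMap_eq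
    intro k
    apply Subtype.ext
    funext w
    show algebraMap K (W → R) k w = (Pi.constRingHom W R (algebraMap K R k)) w
    rfl
  haveI hQft : Algebra.FiniteType K ↥(QcovSubalgebra K a s m) :=
    Algebra.FiniteType.trans hRft ‹Algebra.FiniteType R ↥(QcovSubalgebra K a s m)›
  refine ⟨(Subalgebra.fg_iff_finiteType _).mpr hQft, ?_⟩
  exact Algebra.FiniteType.isNoetherianRing K _

end Statement19
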